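/- For all positive integers k and m, φ^(k)(m) = m^k · ∏_{p | m} (1 - 1/p^k), where the product is over the distinct primes p dividing m. -/

import Mathlib

/-- The k-th power greatest common divisor `(a,b)_k`: the largest k-th power `d^k`
(with `d` a positive integer) dividing both `a` and `b`. -/
noncomputable def kgcd (k : ℕ) (a b : ℤ) : ℕ :=
  sSup {n : ℕ | (∃ d : ℕ, 0 < d ∧ n = d ^ k) ∧ (n : ℤ) ∣ a ∧ (n : ℤ) ∣ b}

/-- The Eckford Cohen totient function `φ^(k)(m)`: the number of integers `a` with
`1 ≤ a ≤ m^k` and `(a, m^k)_k = 1`. -/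
noncomputable def cohenTotient (k m : ℕ) : ℕ :=
  ((Finset.Icc 1 (m ^ k)).filter fun a : ℕ => kgcd k (a : ℤ) ((m : ℤ) ^ k) = 1).card



open Finset

lemma prod_pow_dvd_iff_aux {k a : ℕ} {t : Finset ℕ} (ht : ∀ p ∈ t, p.Prime) :
    (∏ p ∈ t, p ^ k) ∣ a ↔ ∀ p ∈ t, p ^ k ∣ a := by
  classical
  induction t using Finset.induction with
  | empty => simp
  | @insert q s hq ih =>
    rw [Finset.prod_insert hq]
    constructor
    · intro h p hp
      rcases Finset.mem_insert.mp hp with rfl | hp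
      · exact dvd_trans (dvd_mul_right _ _) h
      · exact ((ih fun p hp => ht p (Finset.mem_insert_of_mem hp)).mp
          (dvd_trans (dvd_mul_left _ _) h)) p hp
    · intro h
      have hcop : Nat.Coprime (q ^ k) (∏ p ∈ s, p ^ k) := by
        apply Nat.Coprime.prod_right
        intro p hp
        exact (Nat.coprime_primes (ht q (Finset.mem_insert_self q s))
          (ht p (Finset.mem_insert_of_mem hp))).mpr
          (fun e => hq (e ▸ hp)) |>.pow _ _
      exact hcop.mul_dvd_of_dvd_of_dvd (h q (Finset.mem_insert_self q s))
        ((ih fun p hp => ht p (Finset.mem_insert_of_mem hp)).mpr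
          fun p hp => h p (Finset.mem_insert_of_mem hp))

lemma kgcd_eq_one_iff {k m a : ℕ} (hk : 0 < k) (hm : 0 < m) (ha : 0 < a) :
    kgcd k (a : ℤ) ((m : ℤ) ^ k) = 1 ↔ ∀ p ∈ m.primeFactors, ¬ p ^ k ∣ a := by
  have h1 : (1 : ℕ) ∈ {n : ℕ | (∃ d : ℕ, 0 < d ∧ n = d ^ k) ∧ (n : ℤ) ∣ (a : ℤ) ∧
      (n : ℤ) ∣ (m : ℤ) ^ k} := ⟨⟨1, one_pos, (one_pow k).symm⟩, one_dvd _, one_dvd _⟩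
  have hbdd : BddAbove {n : ℕ | (∃ d : ℕ, 0 < d ∧ n = d ^ k) ∧ (n : ℤ) ∣ (a : ℤ) ∧
      (n : ℤ) ∣ (m : ℤ) ^ k} := by
    refine ⟨a, fun n hn => ?_⟩
    exact_mod_cast Int.le_of_dvd (by exact_mod_cast ha) hn.2.1
  constructor
  · intro h p hp hpa
    have hpp : p.Prime := Nat.prime_of_mem_primeFactors hp
    have hpm : p ∣ m := Nat.dvd_of_mem_primeFactors hp
    have hmem : p ^ k ∈ {n : ℕ | (∃ d : ℕ, 0 < d ∧ n = d ^ k) ∧ (n : ℤ) ∣ (a : ℤ) ∧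
        (n : ℤ) ∣ (m : ℤ) ^ k} := by
      refine ⟨⟨p, hpp.pos, rfl⟩, ?_, ?_⟩
      · exact_mod_cast Int.natCast_dvd_natCast.mpr hpa
      · push_cast
        exact pow_dvd_pow_of_dvd (Int.natCast_dvd_natCast.mpr hpm) k
    have := le_csSup hbdd hmem
    rw [kgcd] at h
    rw [h] at this
    have : 2 ≤ 1 := le_trans (le_trans hpp.two_le (Nat.le_self_pow hk.ne' p)) this
    omega
  · intro h
    rw [kgcd]
    refine le_antisymm (csSup_le ⟨1, h1⟩ ?_) (le_csSup hbdd h1)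
    rintro n ⟨⟨d, hd, rfl⟩, hda, hdm⟩
    by_contra hne
    have hd1 : 1 < d := by
      rcases Nat.lt_or_ge 1 d with h2 | h2
      · exact h2
      · exfalso
        apply hne
        have hd1' : d = 1 := le_antisymm h2 hd
        simp [hd1']
    set p := d.minFac with hp
    have hpp : p.Prime := Nat.minFac_prime (by omega)
    have hpd : p ∣ d := Nat.minFac_dvd d
    have hdka : d ^ k ∣ a := Int.natCast_dvd_natCast.mp hda
    have hdkm : d ^ k ∣ m ^ k := by
      have : ((d ^ k : ℕ) : ℤ) ∣ ((m ^ k : ℕ) : ℤ) := by push_cast; exact_mod_cast hdm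
      exact_mod_cast this
    have hpm : p ∣ m := hpp.dvd_of_dvd_pow (dvd_trans (dvd_trans (dvd_pow hpd hk.ne') hdkm) dvd_rfl)
    have hpa : p ^ k ∣ a := dvd_trans (pow_dvd_pow_of_dvd hpd k) hdka
    exact h p (Nat.mem_primeFactors.mpr ⟨hpp, hpm, hm.ne'⟩) hpa

/-- `φ^(k)(m) = m^k · ∏_{p ∣ m} (1 - 1/p^k)`, the product being over the distinct
primes dividing `m`. -/
theorem cohenTotient_prod_formula (k m : ℕ) (hk : 0 < k) (hm : 0 < m) :
    (cohenTotient k m : ℚ) = (m : ℚ) ^ k * ∏ p ∈ m.primeFactors, (1 - 1 / (p : ℚ) ^ k) := by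
  classical
  set N := m ^ k with hN
  set P := m.primeFactors with hP
  have hNpos : 0 < N := pow_pos hm k
  -- rewrite the filter
  have hfilter : cohenTotient k m =
      ((Finset.Icc 1 N).filter fun a => ∀ p ∈ P, ¬ p ^ k ∣ a).card := by
    rw [cohenTotient]
    congr 1
    apply Finset.filter_congr
    intro a ha
    have ha1 : 0 < a := (Finset.mem_Icc.mp ha).1
    simp only [kgcd_eq_one_iff hk hm ha1]
    exact Iff.rfl
  -- key divisibility facts for subsets of P
  have hprimes : ∀ t ∈ P.powerset, ∀ p ∈ t, p.Prime := fun t ht p hp =>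
    Nat.prime_of_mem_primeFactors (Finset.mem_powerset.mp ht hp)
  have hDdvd : ∀ t ∈ P.powerset, (∏ p ∈ t, p ^ k) ∣ N := by
    intro t ht
    rw [prod_pow_dvd_iff_aux (hprimes t ht)]
    intro p hp
    exact pow_dvd_pow_of_dvd (Nat.dvd_of_mem_primeFactors (Finset.mem_powerset.mp ht hp)) k
  have hDpos : ∀ t : Finset ℕ, t ∈ P.powerset → (0:ℚ) < ∏ p ∈ t, (p:ℚ) ^ k := by
    intro t ht
    apply Finset.prod_pos
    intro p hp
    have := (hprimes t ht p hp).pos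
    positivity
  -- LHS computation
  have lhs_eq : (cohenTotient k m : ℚ) =
      ∑ t ∈ P.powerset, (-1 : ℚ) ^ t.card * ((N : ℚ) / ∏ p ∈ t, (p : ℚ) ^ k) := by
    rw [hfilter, Finset.card_filter]
    push_cast
    have step1 : ∀ a ∈ Finset.Icc 1 N,
        (if ∀ p ∈ P, ¬ p ^ k ∣ a then (1:ℚ) else 0) =
        ∏ p ∈ P, ((-(if p ^ k ∣ a then (1:ℚ) else 0)) + 1) := by
      intro a _
      by_cases h : ∀ p ∈ P, ¬ p ^ k ∣ a
      · rw [if_pos h]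
        symm
        apply Finset.prod_eq_one
        intro p hp
        rw [if_neg (h p hp)]
        ring
      · rw [if_neg h]
        push_neg at h
        obtain ⟨p, hp, hdvd⟩ := h
        refine (Finset.prod_eq_zero hp ?_).symm
        simp [hdvd]
    rw [Finset.sum_congr rfl step1]
    have step2 : ∀ a ∈ Finset.Icc 1 N,
        ∏ p ∈ P, ((-(if p ^ k ∣ a then (1:ℚ) else 0)) + 1) =
        ∑ t ∈ P.powerset, (-1:ℚ) ^ t.card * (if (∏ p ∈ t, p ^ k) ∣ a then (1:ℚ) else 0) := by
      intro a _
      rw [Finset.prod_add]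
      apply Finset.sum_congr rfl
      intro t ht
      rw [Finset.prod_const_one, mul_one]
      rw [show (fun p => -(if p ^ k ∣ a then (1:ℚ) else 0)) = fun p =>
        (-1) * (if p ^ k ∣ a then (1:ℚ) else 0) from funext fun p => by ring]
      rw [Finset.prod_mul_distrib, Finset.prod_const, Finset.prod_boole]
      congr 1
      exact if_congr (prod_pow_dvd_iff_aux (hprimes t ht)).symm rfl rfl
    rw [Finset.sum_congr rfl step2, Finset.sum_comm]
    apply Finset.sum_congr rfl
    intro t ht
    rw [← Finset.mul_sum]
    congr 1
    have : ∑ a ∈ Finset.Icc 1 N, (if (∏ p ∈ t, p ^ k) ∣ a then (1:ℚ) else 0) =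
        (((Finset.Icc 1 N).filter fun a => (∏ p ∈ t, p ^ k) ∣ a).card : ℚ) := by
      rw [Finset.card_filter]; push_cast; rfl
    rw [this]
    have hIcc : Finset.Icc 1 N = Finset.Ioc 0 N := rfl
    rw [hIcc, Nat.Ioc_filter_dvd_card_eq_div]
    rw [Nat.cast_div (hDdvd t ht) (by exact_mod_cast (hDpos t ht).ne')]
    push_cast
    rfl
  rw [lhs_eq]
  -- RHS computation
  have rhs_eq : ∏ p ∈ P, (1 - 1 / (p : ℚ) ^ k) =
      ∑ t ∈ P.powerset, (-1:ℚ) ^ t.card * (1 / ∏ p ∈ t, (p:ℚ) ^ k) := by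
    rw [show (fun p : ℕ => 1 - 1 / (p : ℚ) ^ k) = fun p : ℕ => (-(1 / (p:ℚ)^k)) + 1 from
      funext fun p => by ring]
    rw [Finset.prod_add]
    apply Finset.sum_congr rfl
    intro t ht
    rw [Finset.prod_const_one, mul_one]
    rw [show (fun p : ℕ => -(1 / (p:ℚ)^k)) = fun p : ℕ => (-1) * (1 / (p:ℚ)^k) from
      funext fun p => by ring]
    rw [Finset.prod_mul_distrib, Finset.prod_const]
    congr 1
    rw [Finset.prod_div_distrib]
    simp
  rw [rhs_eq, Finset.mul_sum]
  apply Finset.sum_congr rfl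
  intro t ht
  have : (N : ℚ) = (m : ℚ) ^ k := by push_cast [hN]; ring
  rw [← this]
  ring
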